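/- Let D be an m×n diagram with N white cells, let σ = σ_D be its pipe-dream permutation of {1,…,m+n}, and let ω be the pipe-dream permutation of the all-black m×n diagram, i.e. ω(i) = m+i for 1 ≤ i ≤ n and ω(i) = i−n for n+1 ≤ i ≤ m+n. Then the kernel of the (m+n)×(m+n) matrix P_ω + P_σ over ℚ is isomorphic, as a ℚ-vector space, to the kernel of the N×N matrix M(D) over ℚ. -/
import Mathlib


/- Pipe-dream path following in an `m × n` grid of cells `(i, j)`, with rows
`i ∈ {1,…,m}` indexed top-to-bottom and columns `j ∈ {1,…,n}` left-to-right;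
`black i j = true` means cell `(i,j)` is black.  A path entering a black cell
passes straight through; a path entering a white cell from its bottom edge
leaves through its left edge, and a path entering a white cell from its right
edge leaves through its top edge.  The left edge of row `i` is labelled `i` and
the top edge of column `j` is labelled `m + j`.
`pipeExitUp m black i j` is the exit label of a path about to enter cell `(i,j)`
from below (moving up); `i = 0` means the path has exited through the top edge
of column `j`. -/
mutual
  /-- See the comment above this `mutual` block. -/
  def pipeExitUp (m : ℕ) (black : ℕ → ℕ → Bool) : ℕ → ℕ → ℕ
    | 0, j => m + j
    | _+1, 0 => 0
    | i+1, j+1 =>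
        if black (i+1) (j+1) then pipeExitUp m black i (j+1)
        else pipeExitLeft m black (i+1) j
  termination_by i j => i + j
  /-- `pipeExitLeft m black i j` is the exit label of a path about to enter cell
  `(i,j)` from the right (moving left); `j = 0` means the path has exited
  through the left edge of row `i`, which is labelled `i`. -/
  def pipeExitLeft (m : ℕ) (black : ℕ → ℕ → Bool) : ℕ → ℕ → ℕ
    | i, 0 => i
    | 0, _+1 => 0
    | i+1, j+1 =>
        if black (i+1) (j+1) then pipeExitLeft m black (i+1) j
        else pipeExitUp m black i (j+1)
  termination_by i j => i + j
end

/-- The pipe-dream permutation `σ_D`, as a function on the labels `1,…,m+n`: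
`σ_D a` is the exit label of the path starting at the bottom edge of column `a`
(for `1 ≤ a ≤ n`), resp. at the right edge of row `a - n`
(for `n + 1 ≤ a ≤ m + n`, the right edge of row `i` being labelled `n + i`). -/
def pipeFun (m n : ℕ) (black : ℕ → ℕ → Bool) (a : ℕ) : ℕ :=
  if a ≤ n then pipeExitUp m black m a else pipeExitLeft m black (a - n) n

/-- The colouring function (with 1-indexed rows and columns) of a diagram
`D : Fin m → Fin n → Bool`, where `D i j = true` means that the cell in row
`i + 1` and column `j + 1` is black (and `false` means white). -/
def blackOf {m n : ℕ} (D : Fin m → Fin n → Bool) (i j : ℕ) : Bool :=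
  if h : 1 ≤ i ∧ i ≤ m ∧ 1 ≤ j ∧ j ≤ n then D ⟨i - 1, by omega⟩ ⟨j - 1, by omega⟩
  else true

/-- The pipe-dream permutation `ω` of the all-black `m × n` diagram, as a
function on the labels `1,…,m+n`: `ω i = m + i` for `1 ≤ i ≤ n` and
`ω i = i - n` for `n + 1 ≤ i ≤ m + n`. -/
def omegaFun (m n i : ℕ) : ℕ := if i ≤ n then m + i else i - n

/-- The `N × N` skew-symmetric matrix `M(D)` associated to a diagram `D` with
`N` white cells labelled by `e : Fin N ≃ {white cells}` (rows indexed
top-to-bottom, so "strictly below" means a larger row index, and "strictly to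
the right" means a larger column index):  `M(D)[i,j] = 1` if white cell `i` is
strictly below (same column) or strictly to the right (same row) of white cell
`j`; `M(D)[i,j] = -1` if white cell `i` is strictly above or strictly to the
left of white cell `j`; and `M(D)[i,j] = 0` otherwise. -/
def cauchonMatrix {m n N : ℕ} (D : Fin m → Fin n → Bool)
    (e : Fin N ≃ {p : Fin m × Fin n // D p.1 p.2 = false}) :
    Matrix (Fin N) (Fin N) ℚ :=
  Matrix.of fun i j =>
    if ((e i).1.2 = (e j).1.2 ∧ (e j).1.1 < (e i).1.1) ∨
       ((e i).1.1 = (e j).1.1 ∧ (e j).1.2 < (e i).1.2) then 1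
    else if ((e i).1.2 = (e j).1.2 ∧ (e i).1.1 < (e j).1.1) ∨
            ((e i).1.1 = (e j).1.1 ∧ (e i).1.2 < (e j).1.2) then -1
    else 0

/-- The permutation matrix of `μ`: `P_μ[i,j] = 1` if `j = μ i` and `0`
otherwise; thus `(P_μ v) i = v (μ i)`. -/
def permMat {N : ℕ} (μ : Equiv.Perm (Fin N)) : Matrix (Fin N) (Fin N) ℚ :=
  Matrix.of fun i j => if j = μ i then 1 else 0

namespace KerPipeAux

open Finset

variable {m n N : ℕ}

/-- Extension of a vector on `Fin (m+n)` to labels `1,…,m+n` in `ℕ`. -/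
def vx (m n : ℕ) (v : Fin (m + n) → ℚ) (k : ℕ) : ℚ :=
  if h : 0 < k ∧ k ≤ m + n then v ⟨k - 1, by omega⟩ else 0

lemma vx_coe (v : Fin (m + n) → ℚ) (c : Fin (m + n)) : vx m n v ((c : ℕ) + 1) = v c := by
  have h : 0 < (c : ℕ) + 1 ∧ (c : ℕ) + 1 ≤ m + n := ⟨Nat.succ_pos _, c.isLt⟩
  simp only [vx, dif_pos h]
  rfl

lemma vx_add (v w : Fin (m + n) → ℚ) (k : ℕ) :
    vx m n (v + w) k = vx m n v k + vx m n w k := by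
  unfold vx; split <;> simp

lemma vx_smul (q : ℚ) (v : Fin (m + n) → ℚ) (k : ℕ) :
    vx m n (q • v) k = q * vx m n v k := by
  unfold vx; split <;> simp

section Pipes

variable (mm : ℕ) (bl : ℕ → ℕ → Bool)

lemma pUp_zero (j : ℕ) : pipeExitUp mm bl 0 j = mm + j := by rw [pipeExitUp]

lemma pL_zero (i : ℕ) : pipeExitLeft mm bl i 0 = i := by rw [pipeExitLeft]

lemma pUp_black {i j : ℕ} (h : bl (i+1) (j+1) = true) :
    pipeExitUp mm bl (i+1) (j+1) = pipeExitUp mm bl i (j+1) := by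
  rw [pipeExitUp, if_pos h]

lemma pUp_white {i j : ℕ} (h : bl (i+1) (j+1) = false) :
    pipeExitUp mm bl (i+1) (j+1) = pipeExitLeft mm bl (i+1) j := by
  rw [pipeExitUp, if_neg (by simp [h])]

lemma pL_black {i j : ℕ} (h : bl (i+1) (j+1) = true) :
    pipeExitLeft mm bl (i+1) (j+1) = pipeExitLeft mm bl (i+1) j := by
  rw [pipeExitLeft, if_pos h]

lemma pL_white {i j : ℕ} (h : bl (i+1) (j+1) = false) :
    pipeExitLeft mm bl (i+1) (j+1) = pipeExitUp mm bl i (j+1) := by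
  rw [pipeExitLeft, if_neg (by simp [h])]

end Pipes

lemma blackOf_cell (D : Fin m → Fin n → Bool) {i j : ℕ} (hi : i < m) (hj : j < n) :
    blackOf D (i+1) (j+1) = D ⟨i, hi⟩ ⟨j, hj⟩ := by
  have h : 1 ≤ i+1 ∧ i+1 ≤ m ∧ 1 ≤ j+1 ∧ j+1 ≤ n := by omega
  simp only [blackOf, dif_pos h]
  rfl

variable (D : Fin m → Fin n → Bool) (e : Fin N ≃ {p : Fin m × Fin n // D p.1 p.2 = false})

/-- the value of `x` on the (0-indexed) cell `(a,b)`, extended by `0` off white cells. -/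
def Wf (x : Fin N → ℚ) (a b : ℕ) : ℚ :=
  if h : a < m ∧ b < n then
    (if hw : D ⟨a, h.1⟩ ⟨b, h.2⟩ = false then x (e.symm ⟨(⟨a, h.1⟩, ⟨b, h.2⟩), hw⟩) else 0)
  else 0

lemma Wf_white (x : Fin N → ℚ) {a b : ℕ} (ha : a < m) (hb : b < n)
    (hw : D ⟨a, ha⟩ ⟨b, hb⟩ = false) :
    Wf D e x a b = x (e.symm ⟨(⟨a, ha⟩, ⟨b, hb⟩), hw⟩) := by
  simp only [Wf, dif_pos (⟨ha, hb⟩ : a < m ∧ b < n), dif_pos hw]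

lemma Wf_black (x : Fin N → ℚ) {a b : ℕ} (ha : a < m) (hb : b < n)
    (hw : D ⟨a, ha⟩ ⟨b, hb⟩ = true) :
    Wf D e x a b = 0 := by
  simp only [Wf, dif_pos (⟨ha, hb⟩ : a < m ∧ b < n)]
  rw [dif_neg (by simp [hw])]

lemma Wf_add (x y : Fin N → ℚ) (a b : ℕ) :
    Wf D e (x + y) a b = Wf D e x a b + Wf D e y a b := by
  unfold Wf; split
  · split <;> simp
  · simp

lemma Wf_smul (q : ℚ) (x : Fin N → ℚ) (a b : ℕ) :
    Wf D e (q • x) a b = q * Wf D e x a b := by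
  unfold Wf; split
  · split <;> simp
  · simp

/-- column partial sum: rows `0,…,i-1` (0-indexed) of column `b`. -/
def CS (x : Fin N → ℚ) (b i : ℕ) : ℚ := ∑ t ∈ Finset.range i, Wf D e x t b

/-- row partial sum: columns `0,…,j-1` (0-indexed) of row `a`. -/
def RS (x : Fin N → ℚ) (a j : ℕ) : ℚ := ∑ t ∈ Finset.range j, Wf D e x a t

lemma CS_succ (x : Fin N → ℚ) (b i : ℕ) :
    CS D e x b (i+1) = CS D e x b i + Wf D e x i b := Finset.sum_range_succ _ _

lemma RS_succ (x : Fin N → ℚ) (a j : ℕ) :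
    RS D e x a (j+1) = RS D e x a j + Wf D e x a j := Finset.sum_range_succ _ _

lemma sum_if_lt (g : ℕ → ℚ) {a M : ℕ} (ha : a ≤ M) :
    ∑ t ∈ Finset.range M, (if t < a then g t else 0) = ∑ t ∈ Finset.range a, g t := by
  have h1 : ∑ t ∈ Finset.range a, (if t < a then g t else 0)
      = ∑ t ∈ Finset.range M, (if t < a then g t else 0) :=
    Finset.sum_subset (Finset.range_subset_range.2 ha)
      (fun t _ ht => if_neg (by simp only [Finset.mem_range] at ht; omega))
  rw [← h1]
  exact Finset.sum_congr rfl fun t ht => if_pos (Finset.mem_range.1 ht)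

lemma sum_signed (g : ℕ → ℚ) {a M : ℕ} (ha : a < M) :
    ∑ t ∈ Finset.range M, (if t < a then g t else if a < t then -g t else 0)
      = (∑ t ∈ Finset.range a, g t) + (∑ t ∈ Finset.range (a+1), g t)
        - ∑ t ∈ Finset.range M, g t := by
  have split : ∀ t, (if t < a then g t else if a < t then -g t else 0)
      = (if t < a then g t else 0) + ((if t < a + 1 then g t else 0) - g t) := by
    intro t
    rcases lt_trichotomy t a with h | h | h
    · rw [if_pos h, if_pos h, if_pos (by omega)]; ring
    · rw [if_neg (by omega), if_neg (by omega), if_neg (by omega), if_pos (by omega)]; ring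
    · rw [if_neg (by omega), if_pos h, if_neg (by omega), if_neg (by omega)]; ring
  rw [Finset.sum_congr rfl (fun t _ => split t), Finset.sum_add_distrib,
    Finset.sum_sub_distrib, sum_if_lt g ha.le, sum_if_lt g (by omega : a + 1 ≤ M)]
  ring

lemma Wf_fin (x : Fin N → ℚ) (c : Fin m × Fin n) :
    Wf D e x (c.1 : ℕ) (c.2 : ℕ)
      = if hw : D c.1 c.2 = false then x (e.symm ⟨c, hw⟩) else 0 := by
  obtain ⟨⟨a, ha⟩, ⟨b, hb⟩⟩ := c
  simp only [Wf, dif_pos (show a < m ∧ b < n from ⟨ha, hb⟩)]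

/-- The coefficient of the Cauchon matrix, as a function of the two cells. -/
def coefQ (q c : Fin m × Fin n) : ℚ :=
  if (q.2 = c.2 ∧ c.1 < q.1) ∨ (q.1 = c.1 ∧ c.2 < q.2) then 1
  else if (q.2 = c.2 ∧ q.1 < c.1) ∨ (q.1 = c.1 ∧ q.2 < c.2) then -1 else 0

lemma sum_coefQ (x : Fin N → ℚ) (q : Fin m × Fin n) :
    ∑ c : Fin m × Fin n, coefQ q c * Wf D e x (c.1 : ℕ) (c.2 : ℕ)
      = (CS D e x (q.2 : ℕ) (q.1 : ℕ) + CS D e x (q.2 : ℕ) ((q.1 : ℕ) + 1)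
          - CS D e x (q.2 : ℕ) m)
      + (RS D e x (q.1 : ℕ) (q.2 : ℕ) + RS D e x (q.1 : ℕ) ((q.2 : ℕ) + 1)
          - RS D e x (q.1 : ℕ) n) := by
  have hsplit : ∀ c : Fin m × Fin n, coefQ q c * Wf D e x (c.1 : ℕ) (c.2 : ℕ)
      = (if c.2 = q.2 then
          (if (c.1 : ℕ) < (q.1 : ℕ) then Wf D e x (c.1 : ℕ) (c.2 : ℕ)
           else if (q.1 : ℕ) < (c.1 : ℕ) then -Wf D e x (c.1 : ℕ) (c.2 : ℕ) else 0) else 0)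
      + (if c.1 = q.1 then
          (if (c.2 : ℕ) < (q.2 : ℕ) then Wf D e x (c.1 : ℕ) (c.2 : ℕ)
           else if (q.2 : ℕ) < (c.2 : ℕ) then -Wf D e x (c.1 : ℕ) (c.2 : ℕ) else 0) else 0) := by
    intro c
    obtain ⟨⟨a, ha⟩, ⟨b, hb⟩⟩ := c
    obtain ⟨⟨qa, hqa⟩, ⟨qb, hqb⟩⟩ := q
    simp only [coefQ, Fin.mk_lt_mk, Fin.mk.injEq]
    split_ifs <;> first | ring1 | (exfalso; omega)
  rw [Finset.sum_congr rfl (fun c _ => hsplit c), Finset.sum_add_distrib]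
  have hcol : ∑ c : Fin m × Fin n,
      (if c.2 = q.2 then
          (if (c.1 : ℕ) < (q.1 : ℕ) then Wf D e x (c.1 : ℕ) (c.2 : ℕ)
           else if (q.1 : ℕ) < (c.1 : ℕ) then -Wf D e x (c.1 : ℕ) (c.2 : ℕ) else 0) else 0)
      = CS D e x (q.2 : ℕ) (q.1 : ℕ) + CS D e x (q.2 : ℕ) ((q.1 : ℕ) + 1)
          - CS D e x (q.2 : ℕ) m := by
    rw [Fintype.sum_prod_type]
    have h1 : ∀ r : Fin m, (∑ s : Fin n,
        (if s = q.2 then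
          (if (r : ℕ) < (q.1 : ℕ) then Wf D e x (r : ℕ) (s : ℕ)
           else if (q.1 : ℕ) < (r : ℕ) then -Wf D e x (r : ℕ) (s : ℕ) else 0) else 0))
        = (if (r : ℕ) < (q.1 : ℕ) then Wf D e x (r : ℕ) (q.2 : ℕ)
            else if (q.1 : ℕ) < (r : ℕ) then -Wf D e x (r : ℕ) (q.2 : ℕ) else 0) := by
      intro r
      rw [Finset.sum_ite_eq' Finset.univ q.2]
      simp
    have h2 := Fin.sum_univ_eq_sum_range
      (fun t : ℕ => if t < (q.1 : ℕ) then Wf D e x t (q.2 : ℕ)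
            else if (q.1 : ℕ) < t then -Wf D e x t (q.2 : ℕ) else 0) m
    rw [Finset.sum_congr rfl (fun r _ => h1 r), h2, sum_signed _ q.1.isLt]
    rfl
  have hrow : ∑ c : Fin m × Fin n,
      (if c.1 = q.1 then
          (if (c.2 : ℕ) < (q.2 : ℕ) then Wf D e x (c.1 : ℕ) (c.2 : ℕ)
           else if (q.2 : ℕ) < (c.2 : ℕ) then -Wf D e x (c.1 : ℕ) (c.2 : ℕ) else 0) else 0)
      = RS D e x (q.1 : ℕ) (q.2 : ℕ) + RS D e x (q.1 : ℕ) ((q.2 : ℕ) + 1)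
          - RS D e x (q.1 : ℕ) n := by
    rw [Fintype.sum_prod_type]
    have h0 : ∀ r : Fin m, (∑ s : Fin n,
        (if r = q.1 then
          (if (s : ℕ) < (q.2 : ℕ) then Wf D e x (r : ℕ) (s : ℕ)
           else if (q.2 : ℕ) < (s : ℕ) then -Wf D e x (r : ℕ) (s : ℕ) else 0) else 0))
        = if r = q.1 then (∑ s : Fin n,
          (if (s : ℕ) < (q.2 : ℕ) then Wf D e x (r : ℕ) (s : ℕ)
           else if (q.2 : ℕ) < (s : ℕ) then -Wf D e x (r : ℕ) (s : ℕ) else 0)) else 0 := by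
      intro r; split_ifs <;> simp
    rw [Finset.sum_congr rfl (fun r _ => h0 r), Finset.sum_ite_eq' Finset.univ q.1]
    simp only [Finset.mem_univ, if_pos]
    have h2 := Fin.sum_univ_eq_sum_range
      (fun t : ℕ => if t < (q.2 : ℕ) then Wf D e x (q.1 : ℕ) t
            else if (q.2 : ℕ) < t then -Wf D e x (q.1 : ℕ) t else 0) n
    rw [h2, sum_signed _ q.2.isLt]
    rfl
  rw [hcol, hrow]

/-- the fundamental grid expression for a row of `cauchonMatrix * x`. -/
lemma mulVec_grid (x : Fin N → ℚ) (k : Fin N) :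
    (cauchonMatrix D e).mulVec x k =
      (CS D e x ((e k).1.2 : ℕ) ((e k).1.1 : ℕ)
        + CS D e x ((e k).1.2 : ℕ) (((e k).1.1 : ℕ) + 1) - CS D e x ((e k).1.2 : ℕ) m)
      + (RS D e x ((e k).1.1 : ℕ) ((e k).1.2 : ℕ)
        + RS D e x ((e k).1.1 : ℕ) (((e k).1.2 : ℕ) + 1) - RS D e x ((e k).1.1 : ℕ) n) := by
  classical
  have h0 : (cauchonMatrix D e).mulVec x k
      = ∑ l : Fin N, coefQ (e k).1 (e l).1 * x l := by
    simp only [Matrix.mulVec, dotProduct, cauchonMatrix, Matrix.of_apply, coefQ]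
  have h1 : ∑ l : Fin N, coefQ (e k).1 (e l).1 * x l
      = ∑ p : {p : Fin m × Fin n // D p.1 p.2 = false},
          coefQ (e k).1 (p : Fin m × Fin n) * x (e.symm p) := by
    rw [← Equiv.sum_comp e.symm (fun l => coefQ (e k).1 (e l).1 * x l)]
    refine Finset.sum_congr rfl fun p _ => ?_
    rw [Equiv.apply_symm_apply]
  have h2 : ∀ p : {p : Fin m × Fin n // D p.1 p.2 = false},
      coefQ (e k).1 (p : Fin m × Fin n) * x (e.symm p)
        = coefQ (e k).1 (p : Fin m × Fin n)
            * Wf D e x ((p : Fin m × Fin n).1 : ℕ) ((p : Fin m × Fin n).2 : ℕ) := by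
    intro p
    rw [Wf_fin, dif_pos p.2]
  have h3 : ∑ p : {p : Fin m × Fin n // D p.1 p.2 = false},
        coefQ (e k).1 (p : Fin m × Fin n)
          * Wf D e x ((p : Fin m × Fin n).1 : ℕ) ((p : Fin m × Fin n).2 : ℕ)
      = ∑ c : Fin m × Fin n, coefQ (e k).1 c * Wf D e x (c.1 : ℕ) (c.2 : ℕ) := by
    rw [← Finset.sum_subtype
      (s := Finset.univ.filter (fun c : Fin m × Fin n => D c.1 c.2 = false)) (by simp)
      (fun c => coefQ (e k).1 c * Wf D e x (c.1 : ℕ) (c.2 : ℕ))]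
    refine Finset.sum_filter_of_ne fun c _ hc => ?_
    by_contra hD
    apply hc
    rw [Wf_fin, dif_neg hD, mul_zero]
  rw [h0, h1, Finset.sum_congr rfl (fun p _ => h2 p), h3, sum_coefQ]

/-- the candidate kernel vector associated with `x`. -/
def Psi (x : Fin N → ℚ) : Fin (m + n) → ℚ :=
  fun c => if (c : ℕ) < m then RS D e x (c : ℕ) n else - CS D e x ((c : ℕ) - m) m

lemma vx_Psi_row (x : Fin N → ℚ) {a : ℕ} (ha : a < m) :
    vx m n (Psi D e x) (a + 1) = RS D e x a n := by
  have h : 0 < a + 1 ∧ a + 1 ≤ m + n := by omega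
  simp only [vx, dif_pos h, Psi]
  show (if a < m then RS D e x a n else - CS D e x (a - m) m) = RS D e x a n
  rw [if_pos ha]

lemma vx_Psi_col (x : Fin N → ℚ) {b : ℕ} (hb : b < n) :
    vx m n (Psi D e x) (m + b + 1) = - CS D e x b m := by
  have h : 0 < m + b + 1 ∧ m + b + 1 ≤ m + n := by omega
  simp only [vx, dif_pos h, Psi]
  show (if m + b < m then RS D e x (m + b) n else - CS D e x (m + b - m) m)
      = - CS D e x b m
  rw [if_neg (by omega), show m + b - m = b by omega]

lemma perm_mulVec (σ ω : Equiv.Perm (Fin (m + n))) (v : Fin (m + n) → ℚ)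
    (c : Fin (m + n)) :
    ((permMat ω + permMat σ).mulVec v) c = v (ω c) + v (σ c) := by
  simp only [Matrix.mulVec, dotProduct, Matrix.add_apply, permMat, Matrix.of_apply]
  have h : ∀ j : Fin (m + n),
      ((if j = ω c then (1:ℚ) else 0) + (if j = σ c then 1 else 0)) * v j
        = (if j = ω c then v j else 0) + (if j = σ c then v j else 0) := by
    intro j; split_ifs <;> ring
  rw [Finset.sum_congr rfl fun j _ => h j, Finset.sum_add_distrib,
    Finset.sum_ite_eq' Finset.univ (ω c) v, Finset.sum_ite_eq' Finset.univ (σ c) v]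
  simp

section Boundary

variable (σ ω : Equiv.Perm (Fin (m + n)))

lemma bdK1
    (hσ : ∀ a : Fin (m + n), ((σ a : ℕ) + 1) = pipeFun m n (blackOf D) ((a : ℕ) + 1))
    (hω : ∀ a : Fin (m + n), ((ω a : ℕ) + 1) = omegaFun m n ((a : ℕ) + 1))
    (v : Fin (m + n) → ℚ) (hv : ∀ c, v (ω c) + v (σ c) = 0) {b : ℕ} (hb : b < n) :
    vx m n v (pipeExitUp m (blackOf D) m (b + 1)) = - vx m n v (m + b + 1) := by
  have hc : b < m + n := by omega
  have h1 : vx m n v (pipeExitUp m (blackOf D) m (b + 1)) = v (σ ⟨b, hc⟩) := by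
    have h := hσ ⟨b, hc⟩
    simp only [pipeFun, if_pos (show b + 1 ≤ n by omega)] at h
    rw [show ((⟨b, hc⟩ : Fin (m + n)) : ℕ) + 1 = b + 1 from rfl] at h
    rw [← h, vx_coe]
  have h2 : vx m n v (m + b + 1) = v (ω ⟨b, hc⟩) := by
    have h := hω ⟨b, hc⟩
    simp only [omegaFun, if_pos (show ((⟨b, hc⟩ : Fin (m + n)) : ℕ) + 1 ≤ n by
      rw [show ((⟨b, hc⟩ : Fin (m + n)) : ℕ) = b from rfl]; omega)] at h
    rw [show m + b + 1 = (ω ⟨b, hc⟩ : ℕ) + 1 by rw [h]; omega, vx_coe]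
  rw [h1, h2]
  linarith [hv ⟨b, hc⟩]

lemma bdK2
    (hσ : ∀ a : Fin (m + n), ((σ a : ℕ) + 1) = pipeFun m n (blackOf D) ((a : ℕ) + 1))
    (hω : ∀ a : Fin (m + n), ((ω a : ℕ) + 1) = omegaFun m n ((a : ℕ) + 1))
    (v : Fin (m + n) → ℚ) (hv : ∀ c, v (ω c) + v (σ c) = 0) {a : ℕ} (ha : a < m) :
    vx m n v (pipeExitLeft m (blackOf D) (a + 1) n) = - vx m n v (a + 1) := by
  have hc : n + a < m + n := by omega
  have h1 : vx m n v (pipeExitLeft m (blackOf D) (a + 1) n) = v (σ ⟨n + a, hc⟩) := by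
    have h := hσ ⟨n + a, hc⟩
    rw [show ((⟨n + a, hc⟩ : Fin (m + n)) : ℕ) + 1 = n + a + 1 from rfl] at h
    simp only [pipeFun, if_neg (show ¬ (n + a + 1 ≤ n) by omega)] at h
    rw [show n + a + 1 - n = a + 1 by omega] at h
    rw [← h, vx_coe]
  have h2 : vx m n v (a + 1) = v (ω ⟨n + a, hc⟩) := by
    have h := hω ⟨n + a, hc⟩
    rw [show ((⟨n + a, hc⟩ : Fin (m + n)) : ℕ) + 1 = n + a + 1 from rfl] at h
    simp only [omegaFun, if_neg (show ¬ (n + a + 1 ≤ n) by omega)] at h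
    rw [show a + 1 = (ω ⟨n + a, hc⟩ : ℕ) + 1 by omega, vx_coe]
  rw [h1, h2]
  linarith [hv ⟨n + a, hc⟩]

end Boundary

/-- the candidate `ker M(D)` vector associated with `v`. -/
def Phi (v : Fin (m + n) → ℚ) : Fin N → ℚ :=
  fun k => (vx m n v (pipeExitUp m (blackOf D) (((e k).1.1 : ℕ) + 1) (((e k).1.2 : ℕ) + 1))
    - vx m n v (pipeExitUp m (blackOf D) ((e k).1.1 : ℕ) (((e k).1.2 : ℕ) + 1))) / 2

lemma Wf_Phi (v : Fin (m + n) → ℚ) {a b : ℕ} (ha : a < m) (hb : b < n)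
    (hw : D ⟨a, ha⟩ ⟨b, hb⟩ = false) :
    2 * Wf D e (Phi D e v) a b
      = vx m n v (pipeExitUp m (blackOf D) (a + 1) (b + 1))
        - vx m n v (pipeExitUp m (blackOf D) a (b + 1)) := by
  rw [Wf_white D e _ ha hb hw]
  simp only [Phi, Equiv.apply_symm_apply]
  ring

lemma phi_diff_U (v : Fin (m + n) → ℚ) {a b : ℕ} (ha : a < m) (hb : b < n) :
    vx m n v (pipeExitUp m (blackOf D) (a + 1) (b + 1))
      = vx m n v (pipeExitUp m (blackOf D) a (b + 1))
        + 2 * Wf D e (Phi D e v) a b := by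
  cases hD : D ⟨a, ha⟩ ⟨b, hb⟩ with
  | true =>
    rw [pUp_black m (blackOf D) ((blackOf_cell D ha hb).trans hD),
      Wf_black D e _ ha hb hD]
    ring
  | false =>
    rw [Wf_Phi D e v ha hb hD]
    ring

lemma phi_diff_L (v : Fin (m + n) → ℚ) {a b : ℕ} (ha : a < m) (hb : b < n) :
    vx m n v (pipeExitLeft m (blackOf D) (a + 1) (b + 1))
      = vx m n v (pipeExitLeft m (blackOf D) (a + 1) b)
        - 2 * Wf D e (Phi D e v) a b := by
  cases hD : D ⟨a, ha⟩ ⟨b, hb⟩ with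
  | true =>
    rw [pL_black m (blackOf D) ((blackOf_cell D ha hb).trans hD),
      Wf_black D e _ ha hb hD]
    ring
  | false =>
    rw [pL_white m (blackOf D) ((blackOf_cell D ha hb).trans hD),
      ← pUp_white m (blackOf D) ((blackOf_cell D ha hb).trans hD),
      Wf_Phi D e v ha hb hD]
    ring

lemma phi_CS (v : Fin (m + n) → ℚ) {b : ℕ} (hb : b < n) :
    ∀ i, i ≤ m → vx m n v (pipeExitUp m (blackOf D) i (b + 1))
      = vx m n v (m + b + 1) + 2 * CS D e (Phi D e v) b i := by
  intro i
  induction i with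
  | zero =>
    intro _
    rw [pUp_zero, show m + (b + 1) = m + b + 1 from rfl]
    simp [CS]
  | succ i ih =>
    intro h
    rw [phi_diff_U D e v (by omega) hb, ih (by omega), CS_succ]
    ring

lemma phi_RS (v : Fin (m + n) → ℚ) {a : ℕ} (ha : a < m) :
    ∀ j, j ≤ n → vx m n v (pipeExitLeft m (blackOf D) (a + 1) j)
      = vx m n v (a + 1) - 2 * RS D e (Phi D e v) a j := by
  intro j
  induction j with
  | zero =>
    intro _
    rw [pL_zero]
    simp [RS]
  | succ j ih =>
    intro h
    rw [phi_diff_L D e v ha (by omega), ih (by omega), RS_succ]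
    ring

lemma phi_mem (σ ω : Equiv.Perm (Fin (m + n)))
    (hσ : ∀ a : Fin (m + n), ((σ a : ℕ) + 1) = pipeFun m n (blackOf D) ((a : ℕ) + 1))
    (hω : ∀ a : Fin (m + n), ((ω a : ℕ) + 1) = omegaFun m n ((a : ℕ) + 1))
    (v : Fin (m + n) → ℚ) (hv : ∀ c, v (ω c) + v (σ c) = 0) :
    (cauchonMatrix D e).mulVec (Phi D e v) = 0 := by
  funext k
  rw [mulVec_grid]
  simp only [Pi.zero_apply]
  set a := ((e k).1.1 : ℕ) with hA
  set b := ((e k).1.2 : ℕ) with hB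
  have ha : a < m := (e k).1.1.isLt
  have hb : b < n := (e k).1.2.isLt
  have hw : D ⟨a, ha⟩ ⟨b, hb⟩ = false := (e k).2
  have e1 := phi_CS D e v hb a ha.le
  have e2 := phi_CS D e v hb (a + 1) (by omega)
  have e3 := phi_CS D e v hb m le_rfl
  have e4 := phi_RS D e v ha b hb.le
  have e5 := phi_RS D e v ha (b + 1) (by omega)
  have e6 := phi_RS D e v ha n le_rfl
  have k1 := bdK1 D σ ω hσ hω v hv hb
  have k2 := bdK2 D σ ω hσ hω v hv ha
  have w1 : vx m n v (pipeExitUp m (blackOf D) (a + 1) (b + 1))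
      = vx m n v (pipeExitLeft m (blackOf D) (a + 1) b) := by
    rw [pUp_white m (blackOf D) ((blackOf_cell D ha hb).trans hw)]
  have w2 : vx m n v (pipeExitLeft m (blackOf D) (a + 1) (b + 1))
      = vx m n v (pipeExitUp m (blackOf D) a (b + 1)) := by
    rw [pL_white m (blackOf D) ((blackOf_cell D ha hb).trans hw)]
  linarith

lemma psi_pipe (x : Fin N → ℚ) (hx : (cauchonMatrix D e).mulVec x = 0) :
    ∀ s i j : ℕ, i + j = s →
      ((i ≤ m → j < n → vx m n (Psi D e x) (pipeExitUp m (blackOf D) i (j + 1))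
          = 2 * CS D e x j i - CS D e x j m) ∧
       (j < m → i ≤ n → vx m n (Psi D e x) (pipeExitLeft m (blackOf D) (j + 1) i)
          = RS D e x j n - 2 * RS D e x j i)) := by
  intro s
  induction s using Nat.strong_induction_on with
  | _ s IH =>
    intro i j hs
    constructor
    · intro him hjn
      cases i with
      | zero =>
        rw [pUp_zero, show m + (j + 1) = m + j + 1 from rfl, vx_Psi_col D e x hjn]
        simp [CS]
      | succ i' =>
        have hi' : i' < m := by omega
        cases hD : D ⟨i', hi'⟩ ⟨j, hjn⟩ with
        | true =>
          rw [pUp_black m (blackOf D) ((blackOf_cell D hi' hjn).trans hD),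
            (IH (i' + j) (by omega) i' j rfl).1 (by omega) hjn,
            CS_succ, Wf_black D e x hi' hjn hD]
          ring
        | false =>
          rw [pUp_white m (blackOf D) ((blackOf_cell D hi' hjn).trans hD),
            (IH (j + i') (by omega) j i' rfl).2 hi' hjn.le]
          have hbal := congrFun hx (e.symm ⟨(⟨i', hi'⟩, ⟨j, hjn⟩), hD⟩)
          rw [mulVec_grid] at hbal
          simp only [Equiv.apply_symm_apply, Pi.zero_apply] at hbal
          have hc := CS_succ D e x j i'
          have hr := RS_succ D e x i' j
          linarith
    · intro hjm hin
      cases i with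
      | zero =>
        rw [pL_zero, vx_Psi_row D e x hjm]
        simp [RS]
      | succ i' =>
        have hi' : i' < n := by omega
        cases hD : D ⟨j, hjm⟩ ⟨i', hi'⟩ with
        | true =>
          rw [pL_black m (blackOf D) ((blackOf_cell D hjm hi').trans hD),
            (IH (i' + j) (by omega) i' j rfl).2 hjm (by omega),
            RS_succ, Wf_black D e x hjm hi' hD]
          ring
        | false =>
          rw [pL_white m (blackOf D) ((blackOf_cell D hjm hi').trans hD),
            (IH (j + i') (by omega) j i' rfl).1 (by omega) hi']
          have hbal := congrFun hx (e.symm ⟨(⟨j, hjm⟩, ⟨i', hi'⟩), hD⟩)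
          rw [mulVec_grid] at hbal
          simp only [Equiv.apply_symm_apply, Pi.zero_apply] at hbal
          have hc := CS_succ D e x i' j
          have hr := RS_succ D e x j i'
          linarith

lemma psi_mem (σ ω : Equiv.Perm (Fin (m + n)))
    (hσ : ∀ a : Fin (m + n), ((σ a : ℕ) + 1) = pipeFun m n (blackOf D) ((a : ℕ) + 1))
    (hω : ∀ a : Fin (m + n), ((ω a : ℕ) + 1) = omegaFun m n ((a : ℕ) + 1))
    (x : Fin N → ℚ) (hx : (cauchonMatrix D e).mulVec x = 0) :
    ∀ c : Fin (m + n), Psi D e x (ω c) + Psi D e x (σ c) = 0 := by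
  intro c
  rw [← vx_coe (Psi D e x) (σ c), ← vx_coe (Psi D e x) (ω c), hσ c, hω c]
  by_cases hcn : (c : ℕ) + 1 ≤ n
  · have hb : (c : ℕ) < n := by omega
    rw [show pipeFun m n (blackOf D) ((c : ℕ) + 1)
        = pipeExitUp m (blackOf D) m ((c : ℕ) + 1) from by
      simp only [pipeFun, if_pos hcn],
      show omegaFun m n ((c : ℕ) + 1) = m + (c : ℕ) + 1 from by
      simp only [omegaFun, if_pos hcn]; omega]
    rw [(psi_pipe D e x hx (m + (c : ℕ)) m (c : ℕ) rfl).1 le_rfl hb,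
      vx_Psi_col D e x hb]
    ring
  · have hcm : (c : ℕ) - n < m := by have := c.isLt; omega
    rw [show pipeFun m n (blackOf D) ((c : ℕ) + 1)
        = pipeExitLeft m (blackOf D) (((c : ℕ) - n) + 1) n from by
      simp only [pipeFun, if_neg hcn]; congr 1; omega,
      show omegaFun m n ((c : ℕ) + 1) = ((c : ℕ) - n) + 1 from by
      simp only [omegaFun, if_neg hcn]; omega]
    rw [(psi_pipe D e x hx (n + ((c : ℕ) - n)) n ((c : ℕ) - n) rfl).2 hcm le_rfl,
      vx_Psi_row D e x hcm]
    ring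

lemma phi_psi (x : Fin N → ℚ) (hx : (cauchonMatrix D e).mulVec x = 0) :
    Phi D e (Psi D e x) = x := by
  funext k
  simp only [Phi]
  set a := ((e k).1.1 : ℕ) with hA
  set b := ((e k).1.2 : ℕ) with hB
  have ha : a < m := (e k).1.1.isLt
  have hb : b < n := (e k).1.2.isLt
  rw [(psi_pipe D e x hx (a + 1 + b) (a + 1) b rfl).1 (by omega) hb,
    (psi_pipe D e x hx (a + b) a b rfl).1 (by omega) hb]
  have hw : D ⟨a, ha⟩ ⟨b, hb⟩ = false := (e k).2
  have hWf : Wf D e x a b = x k := by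
    rw [Wf_white D e x ha hb hw]
    show x (e.symm (e k)) = x k
    rw [Equiv.symm_apply_apply]
  have hCS := CS_succ D e x b a
  rw [hCS, hWf]
  ring

lemma psi_phi (σ ω : Equiv.Perm (Fin (m + n)))
    (hσ : ∀ a : Fin (m + n), ((σ a : ℕ) + 1) = pipeFun m n (blackOf D) ((a : ℕ) + 1))
    (hω : ∀ a : Fin (m + n), ((ω a : ℕ) + 1) = omegaFun m n ((a : ℕ) + 1))
    (v : Fin (m + n) → ℚ) (hv : ∀ c, v (ω c) + v (σ c) = 0) :
    Psi D e (Phi D e v) = v := by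
  funext c
  by_cases hc : (c : ℕ) < m
  · have h0 : Psi D e (Phi D e v) c = RS D e (Phi D e v) (c : ℕ) n := by
      simp only [Psi, if_pos hc]
    rw [h0]
    have h1 := phi_RS D e v hc n le_rfl
    have h2 := bdK2 D σ ω hσ hω v hv hc
    have h3 : vx m n v ((c : ℕ) + 1) = v c := vx_coe v c
    linarith
  · have hb : (c : ℕ) - m < n := by have := c.isLt; omega
    have h0 : Psi D e (Phi D e v) c = - CS D e (Phi D e v) ((c : ℕ) - m) m := by
      simp only [Psi, if_neg hc]
    rw [h0]
    have h1 := phi_CS D e v hb m le_rfl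
    have h2 := bdK1 D σ ω hσ hω v hv hb
    have h3 : vx m n v (m + ((c : ℕ) - m) + 1) = v c := by
      rw [show m + ((c : ℕ) - m) + 1 = (c : ℕ) + 1 by omega, vx_coe]
    linarith

lemma Phi_add (v w : Fin (m + n) → ℚ) :
    Phi D e (v + w) = Phi D e v + Phi D e w := by
  funext k
  simp only [Phi, vx_add, Pi.add_apply]
  ring

lemma Phi_smul (q : ℚ) (v : Fin (m + n) → ℚ) :
    Phi D e (q • v) = q • Phi D e v := by
  funext k
  simp only [Phi, vx_smul, Pi.smul_apply, smul_eq_mul]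
  ring

lemma Psi_add (x y : Fin N → ℚ) :
    Psi D e (x + y) = Psi D e x + Psi D e y := by
  funext c
  simp only [Psi, CS, RS, Wf_add, Finset.sum_add_distrib, Pi.add_apply]
  split <;> ring

lemma Psi_smul (q : ℚ) (x : Fin N → ℚ) :
    Psi D e (q • x) = q • Psi D e x := by
  funext c
  simp only [Psi, CS, RS, Wf_smul, ← Finset.mul_sum, Pi.smul_apply, smul_eq_mul]
  split <;> ring

end KerPipeAux

/-- For an `m × n` diagram `D` with `N` white cells, pipe-dream permutation `σ`
and `ω` the pipe-dream permutation of the all-black diagram, the kernel of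
`P_ω + P_σ` over `ℚ` is isomorphic, as a `ℚ`-vector space, to the kernel of
`M(D)` over `ℚ`. -/


theorem kernel_permMatrix_equiv_kernel_cauchonMatrix
    (m n N : ℕ) (hm : 0 < m) (hn : 0 < n) (D : Fin m → Fin n → Bool)
    (e : Fin N ≃ {p : Fin m × Fin n // D p.1 p.2 = false})
    (σ : Equiv.Perm (Fin (m + n)))
    (hσ : ∀ a : Fin (m + n), ((σ a : ℕ) + 1) = pipeFun m n (blackOf D) ((a : ℕ) + 1))
    (ω : Equiv.Perm (Fin (m + n)))
    (hω : ∀ a : Fin (m + n), ((ω a : ℕ) + 1) = omegaFun m n ((a : ℕ) + 1)) :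
    Nonempty (LinearMap.ker (permMat ω + permMat σ).mulVecLin ≃ₗ[ℚ]
      LinearMap.ker (cauchonMatrix D e).mulVecLin) := by
  classical
  have memP : ∀ v : Fin (m + n) → ℚ,
      v ∈ LinearMap.ker (permMat ω + permMat σ).mulVecLin
        ↔ ∀ c, v (ω c) + v (σ c) = 0 := by
    intro v
    rw [LinearMap.mem_ker, Matrix.mulVecLin_apply]
    constructor
    · intro h c
      have h2 := congrFun h c
      rwa [KerPipeAux.perm_mulVec σ ω v c, Pi.zero_apply] at h2
    · intro h
      funext c
      rw [KerPipeAux.perm_mulVec σ ω v c, Pi.zero_apply, h c]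
  have memM : ∀ x : Fin N → ℚ,
      x ∈ LinearMap.ker (cauchonMatrix D e).mulVecLin
        ↔ (cauchonMatrix D e).mulVec x = 0 := by
    intro x
    rw [LinearMap.mem_ker, Matrix.mulVecLin_apply]
  let F : (Fin (m + n) → ℚ) →ₗ[ℚ] (Fin N → ℚ) :=
    { toFun := KerPipeAux.Phi D e
      map_add' := KerPipeAux.Phi_add D e
      map_smul' := KerPipeAux.Phi_smul D e }
  let G : (Fin N → ℚ) →ₗ[ℚ] (Fin (m + n) → ℚ) :=
    { toFun := KerPipeAux.Psi D e
      map_add' := KerPipeAux.Psi_add D e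
      map_smul' := KerPipeAux.Psi_smul D e }
  have hF : ∀ v ∈ LinearMap.ker (permMat ω + permMat σ).mulVecLin,
      F v ∈ LinearMap.ker (cauchonMatrix D e).mulVecLin := by
    intro v hv
    rw [memM]
    exact KerPipeAux.phi_mem D e σ ω hσ hω v ((memP v).1 hv)
  have hG : ∀ x ∈ LinearMap.ker (cauchonMatrix D e).mulVecLin,
      G x ∈ LinearMap.ker (permMat ω + permMat σ).mulVecLin := by
    intro x hx
    rw [memP]
    exact KerPipeAux.psi_mem D e σ ω hσ hω x ((memM x).1 hx)
  refine ⟨LinearEquiv.ofLinear (F.restrict hF) (G.restrict hG) ?_ ?_⟩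
  · apply LinearMap.ext
    intro x
    apply Subtype.ext
    show KerPipeAux.Phi D e (KerPipeAux.Psi D e x.1) = x.1
    exact KerPipeAux.phi_psi D e x.1 ((memM x.1).1 x.2)
  · apply LinearMap.ext
    intro v
    apply Subtype.ext
    show KerPipeAux.Psi D e (KerPipeAux.Phi D e v.1) = v.1
    exact KerPipeAux.psi_phi D e σ ω hσ hω v.1 ((memP v.1).1 v.2)
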